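/- Subset-tracking invariant of the a-distinction: for every finite run ρ̄ of Δ_a(M) ending in a state (s, S), the second component S equals exactly the set of states r ∈ Q such that there is a run ρ' of M ending in r that is a-indistinguishable from the first-component projection ρ̄|_1 of ρ̄. -/

import Mathlib

/-- Subset-tracking transition relation of the a-distinction `Δₐ(M)` of a MAS with transition
relation `δ`, labelling `lab` and observable atoms `Pa`. -/
def deltaDist {Q P : Type*} (δ : Q → Q → Prop) (lab : Q → Set P) (Pa : Set P) :
    (Q × Set Q) → (Q × Set Q) → Prop := fun p p' =>
  δ p.1 p'.1 ∧ p'.2 = {r' | lab r' ∩ Pa = lab p'.1 ∩ Pa ∧ ∃ s' ∈ p.2, δ s' r'}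

private lemma chain_concat' {α : Type*} {R : α → α → Prop} {a b : α} {l : List α} :
    List.Chain R a (l ++ [b]) ↔
      List.Chain R a l ∧ R ((a :: l).getLast (List.cons_ne_nil _ _)) b := by
  induction l generalizing a with
  | nil => simp [List.Chain]
  | cons c l ih =>
      simp only [List.Chain] at ih ⊢
      simp only [List.cons_append, List.chain_cons, List.isChain_cons_cons, ih, List.getLast_cons_cons]
      tauto

/-- Subset-tracking invariant: for every finite run `ρ̄` of `Δₐ(M)` (from the
initial state `(q₀,{q₀})`) ending in `(s,S)`, the set `S` is exactly the set of states `r`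
such that some run of `M` ending in `r` is a-indistinguishable from the first-component
projection of `ρ̄`. -/
theorem stmt13 {Q P : Type*} (δ : Q → Q → Prop) (q0 : Q) (lab : Q → Set P) (Pa : Set P)
    (ρ : List (Q × Set Q)) (hρ : List.Chain (deltaDist δ lab Pa) (q0, {q0}) ρ) :
    (((q0, ({q0} : Set Q)) :: ρ).getLast (List.cons_ne_nil _ _)).2 =
      {r : Q | ∃ ρ' : List Q, List.Chain δ q0 ρ' ∧
        ((q0, ({q0} : Set Q)) :: ρ).map (fun p => lab p.1 ∩ Pa) =
          (q0 :: ρ').map (fun q => lab q ∩ Pa) ∧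
        (q0 :: ρ').getLast (List.cons_ne_nil _ _) = r} := by
  induction ρ using List.reverseRecOn with
  | nil =>
      ext r
      simp only [List.getLast_singleton, Set.mem_singleton_iff, Set.mem_setOf_eq]
      constructor
      · rintro rfl
        exact ⟨[], List.Chain.nil, rfl, rfl⟩
      · rintro ⟨ρ', hch, hmap, hlast⟩
        have hlen := congrArg List.length hmap
        simp at hlen
        subst hlen
        simpa using hlast.symm
  | append_singleton l p ih =>
      rw [chain_concat'] at hρ
      obtain ⟨hchain, hstep, hset⟩ := hρ
      have hIH := ih hchain
      have hgl : (((q0, ({q0} : Set Q)) :: (l ++ [p])).getLast (List.cons_ne_nil _ _)) = p :=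
        List.getLast_concat (l := (q0, ({q0} : Set Q)) :: l)
      rw [hgl, hset]
      ext r
      simp only [Set.mem_setOf_eq]
      constructor
      · rintro ⟨hlab, s', hs', hδ⟩
        rw [hIH] at hs'
        obtain ⟨ρ'', hch, hmap, hlast⟩ := hs'
        refine ⟨ρ'' ++ [r], chain_concat'.mpr ⟨hch, hlast ▸ hδ⟩, ?_, ?_⟩
        · rw [show ((q0, ({q0} : Set Q)) :: (l ++ [p])) = (((q0, ({q0} : Set Q)) :: l) ++ [p])
            from rfl, show (q0 :: (ρ'' ++ [r])) = ((q0 :: ρ'') ++ [r]) from rfl,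
            List.map_append, List.map_append, hmap]
          simp [hlab]
        · exact List.getLast_concat (l := q0 :: ρ'')
      · rintro ⟨ρ', hch, hmap, hlast⟩
        have hlen := congrArg List.length hmap
        simp only [List.length_map, List.length_cons, List.length_append,
          List.length_singleton] at hlen
        have hne : ρ' ≠ [] := by
          intro h; subst h; simp at hlen
        obtain ⟨ρ'', r', rfl⟩ : ∃ ρ'' r', ρ' = ρ'' ++ [r'] := by
          rcases List.eq_nil_or_concat ρ' with h | ⟨ρ'', r', h⟩
          · exact absurd h hne
          · exact ⟨ρ'', r', by simpa [List.concat_eq_append] using h⟩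
        have hr' : r' = r := (List.getLast_concat (l := q0 :: ρ'')).symm.trans hlast
        rw [← hr']
        rw [show ((q0, ({q0} : Set Q)) :: (l ++ [p])) = (((q0, ({q0} : Set Q)) :: l) ++ [p])
          from rfl, show (q0 :: (ρ'' ++ [r'])) = ((q0 :: ρ'') ++ [r']) from rfl,
          List.map_append, List.map_append] at hmap
        have hlen2 : (((q0, ({q0} : Set Q)) :: l).map (fun p => lab p.1 ∩ Pa)).length
            = ((q0 :: ρ'').map (fun q => lab q ∩ Pa)).length := by
          have h := congrArg List.length hmap
          simp only [List.length_append, List.length_map, List.length_cons,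
            List.length_singleton, List.length_nil] at h ⊢
          omega
        obtain ⟨hmap1, hmap2⟩ := List.append_inj hmap hlen2
        have hlab : lab r' ∩ Pa = lab p.1 ∩ Pa := by
          simpa using hmap2.symm
        obtain ⟨hch', hδ⟩ := chain_concat'.mp hch
        refine ⟨hlab, (q0 :: ρ'').getLast (List.cons_ne_nil _ _), ?_, hδ⟩
        rw [hIH]
        exact ⟨ρ'', hch', hmap1, rfl⟩
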